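/- Let χ be a Dirichlet character mod k induced by a primitive character χ* mod r. Then r divides k and τ(χ) = μ(k/r)·χ*(k/r)·τ(χ*). -/

import Mathlib

open Complex DirichletCharacter

/-- The Gauss sum of a Dirichlet character χ mod k, τ(χ) = Σ_{h=1}^{k} χ(h)e(h/k). -/
noncomputable def gaussSum' {k : ℕ} (χ : DirichletCharacter ℂ k) : ℂ :=
  ∑ h ∈ Finset.range k, χ (h : ZMod k) * Complex.exp (2 * Real.pi * Complex.I * h / k)

private lemma sum_exp_eq_zero' {s : ℕ} (hs : 2 ≤ s) :
    ∑ b ∈ Finset.range s, Complex.exp (2 * Real.pi * Complex.I * b / s) = 0 := by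
  have hs0 : (s : ℂ) ≠ 0 := Nat.cast_ne_zero.mpr (by omega)
  set z : ℂ := Complex.exp (2 * Real.pi * Complex.I / s) with hz
  have hzb : ∀ b : ℕ, Complex.exp (2 * Real.pi * Complex.I * b / s) = z ^ b := by
    intro b
    rw [hz, ← Complex.exp_nat_mul]
    ring_nf
  have hz1 : z ≠ 1 := by
    intro h
    rw [hz, Complex.exp_eq_one_iff] at h
    obtain ⟨n, hn⟩ := h
    have h2 : (2 * (Real.pi : ℂ) * Complex.I) ≠ 0 := by
      simp [Real.pi_ne_zero, Complex.I_ne_zero]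
    have key : ((n * s : ℤ) : ℂ) = 1 := by
      push_cast
      field_simp at hn
      have h3 : (1 : ℂ) * (2 * Real.pi * Complex.I) = ((n : ℂ) * s) * (2 * Real.pi * Complex.I) := by
        linear_combination (2 * Real.pi * Complex.I) * hn
      have := mul_right_cancel₀ h2 h3
      exact this.symm
    have : (n * s : ℤ) = 1 := by exact_mod_cast key
    have : (s : ℤ) ≤ 1 := Int.le_of_dvd one_pos ⟨n, by linarith⟩
    omega
  have hzs : z ^ s = 1 := by
    have harg : (s : ℂ) * (2 * Real.pi * Complex.I / s) = 2 * Real.pi * Complex.I := by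
      field_simp
    rw [hz, ← Complex.exp_nat_mul, harg, Complex.exp_two_pi_mul_I]
  calc ∑ b ∈ Finset.range s, Complex.exp (2 * Real.pi * Complex.I * b / s)
      = ∑ b ∈ Finset.range s, z ^ b := by simp only [hzb]
    _ = (z ^ s - 1) / (z - 1) := geom_sum_eq hz1 s
    _ = 0 := by rw [hzs]; simp

private lemma T_vanish {r : ℕ} (hr : r ≠ 0) (χstar : DirichletCharacter ℂ r) {s : ℕ} (hs : 2 ≤ s) :
    ∑ m ∈ Finset.range (r * s),
      χstar ((m : ℕ) : ZMod r) * Complex.exp (2 * Real.pi * Complex.I * m / (r * s)) = 0 := by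
  have hs0 : s ≠ 0 := by omega
  have hrC : (r : ℂ) ≠ 0 := Nat.cast_ne_zero.mpr hr
  have hsC : (s : ℂ) ≠ 0 := Nat.cast_ne_zero.mpr hs0
  have hre :
      ∑ m ∈ Finset.range (r * s),
          χstar ((m : ℕ) : ZMod r) * Complex.exp (2 * Real.pi * Complex.I * m / (r * s))
        = ∑ p ∈ Finset.range s ×ˢ Finset.range r,
          χstar ((p.2 + r * p.1 : ℕ) : ZMod r) *
            Complex.exp (2 * Real.pi * Complex.I * (p.2 + r * p.1 : ℕ) / (r * s)) := by
    refine Finset.sum_nbij' (fun m => (m / r, m % r)) (fun p => p.2 + r * p.1) ?_ ?_ ?_ ?_ ?_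
    · intro m hm
      rw [Finset.mem_range] at hm
      refine Finset.mem_product.mpr ⟨Finset.mem_range.mpr ?_, Finset.mem_range.mpr ?_⟩
      · exact (Nat.div_lt_iff_lt_mul (Nat.pos_of_ne_zero hr)).mpr (by rwa [mul_comm] at hm)
      · exact Nat.mod_lt _ (Nat.pos_of_ne_zero hr)
    · intro p hp
      rw [Finset.mem_product, Finset.mem_range, Finset.mem_range] at hp
      rw [Finset.mem_range]
      calc p.2 + r * p.1 < r + r * p.1 := by omega
        _ = r * (p.1 + 1) := by ring
        _ ≤ r * s := Nat.mul_le_mul_left r hp.1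
    · intro m _
      simp [Nat.mod_add_div]
    · intro p hp
      rw [Finset.mem_product, Finset.mem_range, Finset.mem_range] at hp
      have h1 : (p.2 + r * p.1) / r = p.1 := by
        rw [Nat.add_mul_div_left _ _ (Nat.pos_of_ne_zero hr), Nat.div_eq_of_lt hp.2]
        omega
      have h2 : (p.2 + r * p.1) % r = p.2 := by
        rw [Nat.add_mul_mod_self_left, Nat.mod_eq_of_lt hp.2]
      simp [h1, h2]
    · intro m _
      rw [Nat.mod_add_div]
  rw [hre, Finset.sum_product]
  have hterm : ∀ b a : ℕ,
      χstar ((a + r * b : ℕ) : ZMod r) *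
          Complex.exp (2 * Real.pi * Complex.I * (a + r * b : ℕ) / (r * s))
        = Complex.exp (2 * Real.pi * Complex.I * b / s) *
          (χstar ((a : ℕ) : ZMod r) * Complex.exp (2 * Real.pi * Complex.I * a / (r * s))) := by
    intro b a
    have hchi : ((a + r * b : ℕ) : ZMod r) = ((a : ℕ) : ZMod r) := by
      push_cast
      simp [ZMod.natCast_self]
    have hexp : Complex.exp (2 * Real.pi * Complex.I * (a + r * b : ℕ) / (r * s))
        = Complex.exp (2 * Real.pi * Complex.I * a / (r * s)) *
          Complex.exp (2 * Real.pi * Complex.I * b / s) := by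
      rw [← Complex.exp_add]
      congr 1
      push_cast
      field_simp
    rw [hchi, hexp]
    ring
  calc ∑ b ∈ Finset.range s, ∑ a ∈ Finset.range r,
        χstar ((a + r * b : ℕ) : ZMod r) *
          Complex.exp (2 * Real.pi * Complex.I * (a + r * b : ℕ) / (r * s))
      = ∑ b ∈ Finset.range s, Complex.exp (2 * Real.pi * Complex.I * b / s) *
          ∑ a ∈ Finset.range r,
            χstar ((a : ℕ) : ZMod r) * Complex.exp (2 * Real.pi * Complex.I * a / (r * s)) := by
        refine Finset.sum_congr rfl fun b _ => ?_
        rw [Finset.mul_sum]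
        exact Finset.sum_congr rfl fun a _ => hterm b a
    _ = (∑ b ∈ Finset.range s, Complex.exp (2 * Real.pi * Complex.I * b / s)) *
          ∑ a ∈ Finset.range r,
            χstar ((a : ℕ) : ZMod r) * Complex.exp (2 * Real.pi * Complex.I * a / (r * s)) := by
        rw [Finset.sum_mul]
    _ = 0 := by rw [sum_exp_eq_zero' hs, zero_mul]

/-- If χ mod k is induced by the primitive character χ* mod r (so r ∣ k), then
τ(χ) = μ(k/r)·χ*(k/r)·τ(χ*). -/
theorem gaussSum_eq_of_induced {r k : ℕ} (hrk : r ∣ k)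
    (χstar : DirichletCharacter ℂ r) (hprim : χstar.IsPrimitive)
    (χ : DirichletCharacter ℂ k) (hind : χ = changeLevel hrk χstar) :
    gaussSum' χ =
      (ArithmeticFunction.moebius (k / r) : ℂ) * χstar ((k / r : ℕ) : ZMod r) *
        gaussSum' χstar := by
  rcases Nat.eq_zero_or_pos k with hk0 | hk
  · subst hk0
    simp [gaussSum', Nat.zero_div]
  have hr : 0 < r := Nat.pos_of_dvd_of_pos hrk hk
  haveI : NeZero k := ⟨hk.ne'⟩
  haveI : NeZero r := ⟨hr.ne'⟩
  set d := k / r with hd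
  have hkd : k = r * d := (Nat.mul_div_cancel' hrk).symm
  have hd0 : 0 < d := Nat.div_pos (Nat.le_of_dvd hk hrk) hr
  have hdk : d ∣ k := ⟨r, by rw [hkd]; ring⟩
  -- Step A : pointwise expansion of χ via Möbius
  have hA : ∀ h : ℕ, χ ((h : ℕ) : ZMod k)
      = (∑ e ∈ (Nat.gcd h k).divisors, ((ArithmeticFunction.moebius e : ℤ) : ℂ)) *
          χstar ((h : ℕ) : ZMod r) := by
    intro h
    have hmu : (∑ e ∈ (Nat.gcd h k).divisors, ((ArithmeticFunction.moebius e : ℤ) : ℂ))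
        = if Nat.gcd h k = 1 then 1 else 0 := by
      have hint : (∑ e ∈ (Nat.gcd h k).divisors, (ArithmeticFunction.moebius e : ℤ))
          = if Nat.gcd h k = 1 then 1 else 0 := by
        have h1 := ArithmeticFunction.coe_mul_zeta_apply (f := ArithmeticFunction.moebius)
          (x := Nat.gcd h k)
        rw [ArithmeticFunction.moebius_mul_coe_zeta, ArithmeticFunction.one_apply] at h1
        exact h1.symm
      calc (∑ e ∈ (Nat.gcd h k).divisors, ((ArithmeticFunction.moebius e : ℤ) : ℂ))
          = (((∑ e ∈ (Nat.gcd h k).divisors, ArithmeticFunction.moebius e : ℤ)) : ℂ) := by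
            push_cast; rfl
        _ = _ := by rw [hint]; split <;> simp
    by_cases hco : Nat.Coprime h k
    · have hg1 : Nat.gcd h k = 1 := hco
      rw [hmu, if_pos hg1, one_mul]
      have hu : IsUnit ((h : ℕ) : ZMod k) := (ZMod.isUnit_iff_coprime h k).mpr hco
      rw [hind, ← hu.unit_spec, DirichletCharacter.changeLevel_eq_cast_of_dvd]
      congr 1
      rw [hu.unit_spec]
      exact ZMod.cast_natCast hrk h
    · have hg1 : Nat.gcd h k ≠ 1 := hco
      have hu : ¬ IsUnit ((h : ℕ) : ZMod k) := by
        rw [ZMod.isUnit_iff_coprime]; exact hco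
      rw [MulChar.map_nonunit χ hu, hmu, if_neg hg1, zero_mul]
  -- Step B : expand the Gauss sum and swap sums
  have hB : gaussSum' χ
      = ∑ e ∈ k.divisors, ((ArithmeticFunction.moebius e : ℤ) : ℂ) *
          ∑ h ∈ (Finset.range k).filter (fun h => e ∣ h),
            χstar ((h : ℕ) : ZMod r) * Complex.exp (2 * Real.pi * Complex.I * h / k) := by
    rw [gaussSum']
    calc ∑ h ∈ Finset.range k, χ ((h : ℕ) : ZMod k) *
            Complex.exp (2 * Real.pi * Complex.I * h / k)
        = ∑ h ∈ Finset.range k, ∑ e ∈ (Nat.gcd h k).divisors,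
            ((ArithmeticFunction.moebius e : ℤ) : ℂ) *
              (χstar ((h : ℕ) : ZMod r) * Complex.exp (2 * Real.pi * Complex.I * h / k)) := by
          refine Finset.sum_congr rfl fun h _ => ?_
          rw [hA h, Finset.sum_mul, Finset.sum_mul]
          exact Finset.sum_congr rfl fun e _ => by ring
      _ = ∑ e ∈ k.divisors, ∑ h ∈ (Finset.range k).filter (fun h => e ∣ h),
            ((ArithmeticFunction.moebius e : ℤ) : ℂ) *
              (χstar ((h : ℕ) : ZMod r) * Complex.exp (2 * Real.pi * Complex.I * h / k)) := by
          refine Finset.sum_comm' ?_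
          intro h e
          simp only [Finset.mem_range, Nat.mem_divisors, Finset.mem_filter]
          constructor
          · rintro ⟨hhk, he, -⟩
            exact ⟨⟨hhk, he.trans (Nat.gcd_dvd_left h k)⟩, he.trans (Nat.gcd_dvd_right h k),
              hk.ne'⟩
          · rintro ⟨⟨hhk, heh⟩, hek, -⟩
            refine ⟨hhk, Nat.dvd_gcd heh hek, fun hg0 => ?_⟩
            have := Nat.eq_zero_of_gcd_eq_zero_right hg0
            omega
      _ = ∑ e ∈ k.divisors, ((ArithmeticFunction.moebius e : ℤ) : ℂ) *
            ∑ h ∈ (Finset.range k).filter (fun h => e ∣ h),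
              χstar ((h : ℕ) : ZMod r) * Complex.exp (2 * Real.pi * Complex.I * h / k) := by
          refine Finset.sum_congr rfl fun e _ => ?_
          rw [Finset.mul_sum]
  -- Step C : reindex the inner sums
  have hC : ∀ e ∈ k.divisors,
      (∑ h ∈ (Finset.range k).filter (fun h => e ∣ h),
          χstar ((h : ℕ) : ZMod r) * Complex.exp (2 * Real.pi * Complex.I * h / k))
        = χstar ((e : ℕ) : ZMod r) *
            ∑ m ∈ Finset.range (k / e),
              χstar ((m : ℕ) : ZMod r) *
                Complex.exp (2 * Real.pi * Complex.I * m / ((k / e : ℕ) : ℂ)) := by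
    intro e he
    obtain ⟨hek, -⟩ := Nat.mem_divisors.mp he
    have he0 : e ≠ 0 := by rintro rfl; exact hk.ne' (Nat.eq_zero_of_zero_dvd hek)
    have hke0 : k / e ≠ 0 := by
      have := Nat.div_pos (Nat.le_of_dvd hk hek) (Nat.pos_of_ne_zero he0); omega
    have hkeC : (k : ℂ) = (e : ℂ) * ((k / e : ℕ) : ℂ) := by
      exact_mod_cast congrArg (Nat.cast (R := ℂ)) (Nat.mul_div_cancel' hek).symm
    rw [Finset.mul_sum]
    refine Finset.sum_nbij' (fun h => h / e) (fun m => e * m) ?_ ?_ ?_ ?_ ?_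
    · intro h hh
      rw [Finset.mem_filter, Finset.mem_range] at hh
      rw [Finset.mem_range, Nat.lt_div_iff_mul_lt' hek, Nat.mul_div_cancel' hh.2]
      exact hh.1
    · intro m hm
      rw [Finset.mem_range] at hm
      rw [Finset.mem_filter, Finset.mem_range]
      exact ⟨(Nat.lt_div_iff_mul_lt' hek m).mp hm, Dvd.intro m rfl⟩
    · intro h hh
      rw [Finset.mem_filter] at hh
      exact Nat.mul_div_cancel' hh.2
    · intro m _
      exact Nat.mul_div_cancel_left m (Nat.pos_of_ne_zero he0)
    · intro h hh
      rw [Finset.mem_filter] at hh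
      obtain ⟨m, rfl⟩ := hh.2
      rw [Nat.mul_div_cancel_left m (Nat.pos_of_ne_zero he0)]
      have hchi : ((e * m : ℕ) : ZMod r) = ((e : ℕ) : ZMod r) * ((m : ℕ) : ZMod r) := by
        push_cast; ring
      have hexp : Complex.exp (2 * Real.pi * Complex.I * (e * m : ℕ) / k)
          = Complex.exp (2 * Real.pi * Complex.I * m / ((k / e : ℕ) : ℂ)) := by
        congr 1
        rw [hkeC]
        have heC : (e : ℂ) ≠ 0 := Nat.cast_ne_zero.mpr he0
        have hkeC0 : ((k / e : ℕ) : ℂ) ≠ 0 := Nat.cast_ne_zero.mpr hke0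
        push_cast
        field_simp
      rw [hchi, map_mul, hexp]
      ring
  -- Step D : only the term e = d survives
  have hB' : gaussSum' χ
      = ∑ e ∈ k.divisors, ((ArithmeticFunction.moebius e : ℤ) : ℂ) *
          (χstar ((e : ℕ) : ZMod r) *
            ∑ m ∈ Finset.range (k / e),
              χstar ((m : ℕ) : ZMod r) *
                Complex.exp (2 * Real.pi * Complex.I * m / ((k / e : ℕ) : ℂ))) := by
    rw [hB]
    exact Finset.sum_congr rfl fun e he => by rw [hC e he]
  rw [hB', Finset.sum_eq_single_of_mem d (Nat.mem_divisors.mpr ⟨hdk, hk.ne'⟩) ?_]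
  · have hkdr : k / d = r := by rw [hkd, Nat.mul_div_cancel _ hd0]
    rw [hkdr, gaussSum']
    ring
  · intro b hb hbd
    obtain ⟨hbk, -⟩ := Nat.mem_divisors.mp hb
    by_cases hU : IsUnit ((b : ℕ) : ZMod r)
    · have hco : Nat.Coprime b r := (ZMod.isUnit_iff_coprime b r).mp hU
      have hbd' : b ∣ d := hco.dvd_of_dvd_mul_left (hkd ▸ hbk)
      obtain ⟨s, hds⟩ := hbd'
      have hb0 : b ≠ 0 := (Nat.pos_of_mem_divisors hb).ne'
      have hs0 : s ≠ 0 := by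
        rintro rfl
        rw [mul_zero] at hds
        omega
      have hs1 : s ≠ 1 := by
        rintro h1
        rw [h1, mul_one] at hds
        exact hbd hds.symm
      have hs2 : 2 ≤ s := by omega
      have hkb : k / b = r * s := by
        rw [hkd, hds, show r * (b * s) = r * s * b by ring,
          Nat.mul_div_cancel _ (Nat.pos_of_ne_zero hb0)]
      rw [hkb, Nat.cast_mul, T_vanish hr.ne' χstar hs2, mul_zero, mul_zero]
    · rw [MulChar.map_nonunit χstar hU, zero_mul, mul_zero]
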